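/- For every instance of the Budget Optimization problem there exists a single-bid strategy A with spend(A) ≤ B and traffic(A) ≥ (1/2)·OPT, where OPT is the per-query optimum; in particular the best single-bid strategy is a 1/2-approximation to the optimum of the Budget Optimization problem. -/

import Mathlib

open MeasureTheory

/-!
Budget Optimization instances.  A query landscape for query `q` has `S q + 1`
positions with click-through rates `α q 0 ≥ … ≥ α q (S q) = 0` and competing
bids `b q 0 ≥ … ≥ b q (S q) = 0`.  Keywords are `Fin nK`, queries `Fin nQ`,
and `nbrs q` is the (nonempty) set of keywords matching query `q`.
-/

noncomputable def landPos (n : ℕ) (b : Fin (n + 1) → ℝ) (x : ℝ) : Fin (n + 1) :=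
  if h : (Finset.univ.filter (fun i => b i ≤ x)).Nonempty
  then (Finset.univ.filter (fun i => b i ≤ x)).min' h
  else Fin.last n

noncomputable def landClicks (n : ℕ) (α b : Fin (n + 1) → ℝ) (x : ℝ) : ℝ :=
  α (landPos n b x)

noncomputable def landCost (n : ℕ) (α b : Fin (n + 1) → ℝ) (x : ℝ) : ℝ :=
  α (landPos n b x) * b (landPos n b x)

/-- An instance of the Budget Optimization problem. -/
structure BOInstance where
  nK : ℕ
  nQ : ℕ
  nbrs : Fin nQ → Finset (Fin nK)
  nbrs_nonempty : ∀ q, (nbrs q).Nonempty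
  S : Fin nQ → ℕ
  α : (q : Fin nQ) → Fin (S q + 1) → ℝ
  b : (q : Fin nQ) → Fin (S q + 1) → ℝ
  α_anti : ∀ q, Antitone (α q)
  b_anti : ∀ q, Antitone (b q)
  α_last : ∀ q, α q (Fin.last (S q)) = 0
  b_last : ∀ q, b q (Fin.last (S q)) = 0
  budget : ℝ
  budget_nonneg : 0 ≤ budget

/-- The effective bid on query `q` induced by the keyword-bid vector `v`. -/
noncomputable def effBid (I : BOInstance) (v : Fin I.nK → ℝ) (q : Fin I.nQ) : ℝ :=
  (I.nbrs q).sup' (I.nbrs_nonempty q) v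

noncomputable def spendVec (I : BOInstance) (v : Fin I.nK → ℝ) : ℝ :=
  ∑ q, landCost (I.S q) (I.α q) (I.b q) (effBid I v q)

noncomputable def trafficVec (I : BOInstance) (v : Fin I.nK → ℝ) : ℝ :=
  ∑ q, landClicks (I.S q) (I.α q) (I.b q) (effBid I v q)

/-- Expected spend of a distribution over keyword-bid vectors. -/
noncomputable def spendD (I : BOInstance) (μ : Measure (Fin I.nK → ℝ)) : ℝ :=
  ∫ v, spendVec I v ∂μ

/-- Expected traffic of a distribution over keyword-bid vectors. -/
noncomputable def trafficD (I : BOInstance) (μ : Measure (Fin I.nK → ℝ)) : ℝ :=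
  ∫ v, trafficVec I v ∂μ

/-- A strategy: a probability distribution over nonnegative keyword-bid vectors. -/
def IsStrategy (I : BOInstance) (μ : Measure (Fin I.nK → ℝ)) : Prop :=
  IsProbabilityMeasure μ ∧ ∀ᵐ v ∂μ, ∀ k, 0 ≤ v k

/-- A uniform strategy: supported on constant (uniform) bid vectors. -/
def IsUniform (I : BOInstance) (μ : Measure (Fin I.nK → ℝ)) : Prop :=
  IsStrategy I μ ∧ ∀ᵐ v ∂μ, ∃ x : ℝ, 0 ≤ x ∧ v = fun _ => x

/-- A two-bid strategy: a uniform strategy supported on at most two bid vectors. -/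
def IsTwoBid (I : BOInstance) (μ : Measure (Fin I.nK → ℝ)) : Prop :=
  ∃ x y l : ℝ, 0 ≤ x ∧ 0 ≤ y ∧ 0 ≤ l ∧ l ≤ 1 ∧
    μ = ENNReal.ofReal l • Measure.dirac (fun _ => x) +
        ENNReal.ofReal (1 - l) • Measure.dirac (fun _ => y)

/-- A single-bid strategy: a uniform strategy supported on at most one nonzero
bid vector together possibly with the zero vector. -/
def IsSingleBid (I : BOInstance) (μ : Measure (Fin I.nK → ℝ)) : Prop :=
  ∃ x l : ℝ, 0 ≤ x ∧ 0 ≤ l ∧ l ≤ 1 ∧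
    μ = ENNReal.ofReal l • Measure.dirac (fun _ => x) +
        ENNReal.ofReal (1 - l) • Measure.dirac (fun _ => (0 : ℝ))


/-! ### Auxiliary lemmas about landscapes -/

section LandAux

variable {n : ℕ} {α b : Fin (n + 1) → ℝ}

lemma land_b_nonneg (hb : Antitone b) (hb0 : b (Fin.last n) = 0) (i : Fin (n + 1)) :
    0 ≤ b i := hb0 ▸ hb (Fin.le_last i)

lemma land_a_nonneg (hα : Antitone α) (hα0 : α (Fin.last n) = 0) (i : Fin (n + 1)) :
    0 ≤ α i := hα0 ▸ hα (Fin.le_last i)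

lemma landPos_b_le (hb0 : b (Fin.last n) = 0) {x : ℝ} (hx : 0 ≤ x) :
    b (landPos n b x) ≤ x := by
  have hne : (Finset.univ.filter (fun i => b i ≤ x)).Nonempty :=
    ⟨Fin.last n, by simp [hb0, hx]⟩
  unfold landPos
  rw [dif_pos hne]
  exact (Finset.mem_filter.mp (Finset.min'_mem _ hne)).2

lemma landPos_anti : Antitone (landPos n b) := by
  intro x y hxy
  unfold landPos
  by_cases hx : (Finset.univ.filter (fun i => b i ≤ x)).Nonempty
  · have hsub : (Finset.univ.filter (fun i => b i ≤ x)) ⊆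
        Finset.univ.filter (fun i => b i ≤ y) := by
      intro i hi
      simp only [Finset.mem_filter] at hi ⊢
      exact ⟨hi.1, hi.2.trans hxy⟩
    have hy : (Finset.univ.filter (fun i => b i ≤ y)).Nonempty := hx.mono hsub
    rw [dif_pos hx, dif_pos hy]
    exact Finset.min'_le _ _ (hsub (Finset.min'_mem _ hx))
  · rw [dif_neg hx]
    exact Fin.le_last _

lemma landClicks_mono (hα : Antitone α) : Monotone (landClicks n α b) :=
  fun _ _ h => hα (landPos_anti h)

lemma landClicks_nonneg (hα : Antitone α) (hα0 : α (Fin.last n) = 0) (x : ℝ) :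
    0 ≤ landClicks n α b x := land_a_nonneg hα hα0 _

lemma landClicks_le (hα : Antitone α) (x : ℝ) : landClicks n α b x ≤ α 0 :=
  hα (Fin.zero_le _)

lemma landCost_nonneg (hα : Antitone α) (hα0 : α (Fin.last n) = 0)
    (hb : Antitone b) (hb0 : b (Fin.last n) = 0) (x : ℝ) :
    0 ≤ landCost n α b x :=
  mul_nonneg (land_a_nonneg hα hα0 _) (land_b_nonneg hb hb0 _)

lemma landCost_le (hα : Antitone α) (hα0 : α (Fin.last n) = 0)
    (hb : Antitone b) (hb0 : b (Fin.last n) = 0) (x : ℝ) :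
    landCost n α b x ≤ α 0 * b 0 :=
  mul_le_mul (hα (Fin.zero_le _)) (hb (Fin.zero_le _))
    (land_b_nonneg hb hb0 _) (land_a_nonneg hα hα0 0)

lemma landCost_mono (hα : Antitone α) (hα0 : α (Fin.last n) = 0)
    (hb : Antitone b) (hb0 : b (Fin.last n) = 0) :
    Monotone (landCost n α b) := by
  intro x y h
  exact mul_le_mul (hα (landPos_anti h)) (hb (landPos_anti h))
    (land_b_nonneg hb hb0 _) (land_a_nonneg hα hα0 _)

lemma landCost_zero (hb : Antitone b) (hb0 : b (Fin.last n) = 0) :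
    landCost n α b 0 = 0 := by
  have h1 : b (landPos n b 0) ≤ 0 := landPos_b_le hb0 le_rfl
  have h2 : 0 ≤ b (landPos n b 0) := land_b_nonneg hb hb0 _
  unfold landCost
  rw [le_antisymm h1 h2, mul_zero]

lemma landCost_le_clicks_mul (hα : Antitone α) (hα0 : α (Fin.last n) = 0)
    (hb0 : b (Fin.last n) = 0) {x : ℝ} (hx : 0 ≤ x) :
    landCost n α b x ≤ landClicks n α b x * x :=
  mul_le_mul_of_nonneg_left (landPos_b_le hb0 hx) (land_a_nonneg hα hα0 _)

lemma landClicks_key (hα : Antitone α) (hα0 : α (Fin.last n) = 0)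
    (hb : Antitone b) (hb0 : b (Fin.last n) = 0) {x : ℝ} (hx : 0 < x) (β : ℝ) :
    landClicks n α b β ≤ landClicks n α b x + landCost n α b β / x := by
  have hcostnn : 0 ≤ landCost n α b β / x :=
    div_nonneg (landCost_nonneg hα hα0 hb hb0 β) hx.le
  by_cases hne : (Finset.univ.filter (fun i => b i ≤ β)).Nonempty
  · have hbi : b (landPos n b β) ≤ β := by
      unfold landPos
      rw [dif_pos hne]
      exact (Finset.mem_filter.mp (Finset.min'_mem _ hne)).2
    by_cases hbx : b (landPos n b β) ≤ x
    · have hmem : landPos n b β ∈ Finset.univ.filter (fun i => b i ≤ x) :=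
        Finset.mem_filter.mpr ⟨Finset.mem_univ _, hbx⟩
      have hnex : (Finset.univ.filter (fun i => b i ≤ x)).Nonempty := ⟨_, hmem⟩
      have hle : landPos n b x ≤ landPos n b β := by
        unfold landPos
        rw [dif_pos hnex]
        exact Finset.min'_le _ _ hmem
      have h1 : landClicks n α b β ≤ landClicks n α b x := hα hle
      linarith
    · push_neg at hbx
      have h1 : landClicks n α b β ≤ landCost n α b β / x := by
        rw [le_div_iff₀ hx]
        exact mul_le_mul_of_nonneg_left hbx.le (land_a_nonneg hα hα0 _)
      have h2 : 0 ≤ landClicks n α b x := landClicks_nonneg hα hα0 x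
      linarith
  · have hz : landClicks n α b β = 0 := by
      unfold landClicks landPos
      rw [dif_neg hne]
      exact hα0
    rw [hz]
    have h2 := landClicks_nonneg (b := b) hα hα0 x
    linarith

lemma landClicks_le_zero_bid (hα : Antitone α) (hα0 : α (Fin.last n) = 0)
    {β : ℝ} (h : landCost n α b β = 0) :
    landClicks n α b β ≤ landClicks n α b 0 := by
  have h' : α (landPos n b β) * b (landPos n b β) = 0 := h
  rcases mul_eq_zero.mp h' with hA | hB
  · have hz : landClicks n α b β = 0 := hA
    rw [hz]
    exact landClicks_nonneg hα hα0 0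
  · have hmem : landPos n b β ∈ Finset.univ.filter (fun i => b i ≤ (0 : ℝ)) :=
      Finset.mem_filter.mpr ⟨Finset.mem_univ _, le_of_eq hB⟩
    have hne0 : (Finset.univ.filter (fun i => b i ≤ (0 : ℝ))).Nonempty := ⟨_, hmem⟩
    have hle : landPos n b 0 ≤ landPos n b β := by
      unfold landPos
      rw [dif_pos hne0]
      exact Finset.min'_le _ _ hmem
    exact hα hle

end LandAux

lemma effBid_const (I : BOInstance) (x : ℝ) (q : Fin I.nQ) :
    effBid I (fun _ => x) q = x :=
  Finset.sup'_const _ x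

lemma spendVec_const (I : BOInstance) (x : ℝ) :
    spendVec I (fun _ => x) = ∑ q, landCost (I.S q) (I.α q) (I.b q) x := by
  unfold spendVec
  exact Finset.sum_congr rfl fun q _ => by rw [effBid_const]

lemma trafficVec_const (I : BOInstance) (x : ℝ) :
    trafficVec I (fun _ => x) = ∑ q, landClicks (I.S q) (I.α q) (I.b q) x := by
  unfold trafficVec
  exact Finset.sum_congr rfl fun q _ => by rw [effBid_const]

lemma integral_two_dirac {δ : Type*} [MeasurableSpace δ] [MeasurableSingletonClass δ]
    (f : δ → ℝ) (a c : δ) {p q : ℝ} (hp : 0 ≤ p) (hq : 0 ≤ q) :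
    ∫ v, f v ∂(ENNReal.ofReal p • Measure.dirac a + ENNReal.ofReal q • Measure.dirac c) =
      p * f a + q * f c := by
  have h1 : Integrable f (Measure.dirac a) :=
    (integrable_const (f a)).congr (MeasureTheory.ae_eq_dirac f).symm
  have h2 : Integrable f (Measure.dirac c) :=
    (integrable_const (f c)).congr (MeasureTheory.ae_eq_dirac f).symm
  rw [integral_add_measure (h1.smul_measure ENNReal.ofReal_ne_top)
      (h2.smul_measure ENNReal.ofReal_ne_top),
    integral_smul_measure, integral_smul_measure, integral_dirac, integral_dirac,
    ENNReal.toReal_ofReal hp, ENNReal.toReal_ofReal hq, smul_eq_mul, smul_eq_mul]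

/-- There is a single-bid strategy within budget whose traffic is at least half
of the per-query optimum: for every random tuple of nonnegative per-query bids
whose expected total cost is within budget, the strategy obtains at least half
of its expected total clicks. -/
theorem single_bid_half_approximation (I : BOInstance) :
    ∃ μ : Measure (Fin I.nK → ℝ),
      IsSingleBid I μ ∧ spendD I μ ≤ I.budget ∧
      ∀ ν : Measure (Fin I.nQ → ℝ), IsProbabilityMeasure ν →
        (∀ᵐ β ∂ν, ∀ q, 0 ≤ β q) →
        (∫ β, ∑ q, landCost (I.S q) (I.α q) (I.b q) (β q) ∂ν) ≤ I.budget →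
        (1 / 2) * (∫ β, ∑ q, landClicks (I.S q) (I.α q) (I.b q) (β q) ∂ν) ≤
          trafficD I μ := by
  classical
  have hfnn : ∀ β : Fin I.nQ → ℝ, 0 ≤ ∑ q, landClicks (I.S q) (I.α q) (I.b q) (β q) :=
    fun β => Finset.sum_nonneg fun q _ => landClicks_nonneg (I.α_anti q) (I.α_last q) _
  have hgnn : ∀ β : Fin I.nQ → ℝ, 0 ≤ ∑ q, landCost (I.S q) (I.α q) (I.b q) (β q) :=
    fun β => Finset.sum_nonneg fun q _ =>
      landCost_nonneg (I.α_anti q) (I.α_last q) (I.b_anti q) (I.b_last q) _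
  have hT0 : ∀ x : ℝ, 0 ≤ ∑ q, landClicks (I.S q) (I.α q) (I.b q) x :=
    fun x => Finset.sum_nonneg fun q _ => landClicks_nonneg (I.α_anti q) (I.α_last q) _
  have hSp0 : (∑ q, landCost (I.S q) (I.α q) (I.b q) (0 : ℝ)) = 0 :=
    Finset.sum_eq_zero fun q _ => landCost_zero (I.b_anti q) (I.b_last q)
  have hfint : ∀ ν : Measure (Fin I.nQ → ℝ), IsProbabilityMeasure ν →
      Integrable (fun β => ∑ q, landClicks (I.S q) (I.α q) (I.b q) (β q)) ν := by
    intro ν hν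
    haveI := hν
    refine integrable_finset_sum _ fun q _ => ?_
    refine Integrable.mono' (integrable_const (I.α q 0))
      (((landClicks_mono (I.α_anti q)).measurable).comp (measurable_pi_apply q)).aestronglyMeasurable
      (Filter.Eventually.of_forall fun β => ?_)
    rw [Real.norm_eq_abs, abs_of_nonneg (landClicks_nonneg (I.α_anti q) (I.α_last q) _)]
    exact landClicks_le (I.α_anti q) _
  have hgint : ∀ ν : Measure (Fin I.nQ → ℝ), IsProbabilityMeasure ν →
      Integrable (fun β => ∑ q, landCost (I.S q) (I.α q) (I.b q) (β q)) ν := by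
    intro ν hν
    haveI := hν
    refine integrable_finset_sum _ fun q _ => ?_
    refine Integrable.mono' (integrable_const (I.α q 0 * I.b q 0))
      (((landCost_mono (I.α_anti q) (I.α_last q) (I.b_anti q) (I.b_last q)).measurable).comp
        (measurable_pi_apply q)).aestronglyMeasurable
      (Filter.Eventually.of_forall fun β => ?_)
    rw [Real.norm_eq_abs, abs_of_nonneg
      (landCost_nonneg (I.α_anti q) (I.α_last q) (I.b_anti q) (I.b_last q) _)]
    exact landCost_le (I.α_anti q) (I.α_last q) (I.b_anti q) (I.b_last q) _
  have hkey : ∀ x : ℝ, 0 < x → ∀ ν : Measure (Fin I.nQ → ℝ), IsProbabilityMeasure ν →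
      (∫ β, ∑ q, landCost (I.S q) (I.α q) (I.b q) (β q) ∂ν) ≤ I.budget →
      (∫ β, ∑ q, landClicks (I.S q) (I.α q) (I.b q) (β q) ∂ν) ≤
        (∑ q, landClicks (I.S q) (I.α q) (I.b q) x) + I.budget / x := by
    intro x hx ν hν hcost
    haveI := hν
    have h1 : (∫ β, ∑ q, landClicks (I.S q) (I.α q) (I.b q) (β q) ∂ν) ≤
        ∫ β, ((∑ q, landClicks (I.S q) (I.α q) (I.b q) x) +
          (∑ q, landCost (I.S q) (I.α q) (I.b q) (β q)) / x) ∂ν := by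
      refine integral_mono (hfint ν hν)
        ((integrable_const _).add ((hgint ν hν).div_const x)) fun β => ?_
      calc (∑ q, landClicks (I.S q) (I.α q) (I.b q) (β q))
          ≤ ∑ q, (landClicks (I.S q) (I.α q) (I.b q) x +
              landCost (I.S q) (I.α q) (I.b q) (β q) / x) :=
            Finset.sum_le_sum fun q _ =>
              landClicks_key (I.α_anti q) (I.α_last q) (I.b_anti q) (I.b_last q) hx (β q)
        _ = _ := by rw [Finset.sum_add_distrib, Finset.sum_div]
    rw [integral_add (integrable_const _) ((hgint ν hν).div_const x), integral_const,
      integral_div, probReal_univ, one_smul] at h1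
    have h2 : (∫ β, ∑ q, landCost (I.S q) (I.α q) (I.b q) (β q) ∂ν) / x ≤ I.budget / x := by
      gcongr
    linarith
  set A : Set ℝ := {r | ∃ ν : Measure (Fin I.nQ → ℝ), IsProbabilityMeasure ν ∧
      (∀ᵐ β ∂ν, ∀ q, 0 ≤ β q) ∧
      (∫ β, ∑ q, landCost (I.S q) (I.α q) (I.b q) (β q) ∂ν) ≤ I.budget ∧
      r = ∫ β, ∑ q, landClicks (I.S q) (I.α q) (I.b q) (β q) ∂ν} with hA_def
  have hbdd : BddAbove A := by
    refine ⟨∑ q, I.α q 0, ?_⟩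
    intro r hr
    rw [hA_def] at hr
    obtain ⟨ν, hν, -, -, rfl⟩ := hr
    haveI := hν
    calc (∫ β, ∑ q, landClicks (I.S q) (I.α q) (I.b q) (β q) ∂ν)
        ≤ ∫ _, (∑ q, I.α q 0 : ℝ) ∂ν :=
          integral_mono (hfint ν hν) (integrable_const _) fun β =>
            Finset.sum_le_sum fun q _ => landClicks_le (I.α_anti q) _
      _ = ∑ q, I.α q 0 := by rw [integral_const, probReal_univ, one_smul]
  have hz_mem : (∑ q, landClicks (I.S q) (I.α q) (I.b q) (0 : ℝ)) ∈ A := by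
    rw [hA_def]
    refine ⟨Measure.dirac (fun _ => (0 : ℝ)), by infer_instance, ?_, ?_, ?_⟩
    · refine (MeasureTheory.ae_dirac_iff ?_).mpr fun q => le_rfl
      have heq : {β : Fin I.nQ → ℝ | ∀ q, 0 ≤ β q} = ⋂ q, {β | 0 ≤ β q} := by
        ext β; simp
      rw [heq]
      exact MeasurableSet.iInter fun q =>
        measurableSet_le measurable_const (measurable_pi_apply q)
    · rw [integral_dirac]
      simpa using hSp0.le.trans I.budget_nonneg
    · rw [integral_dirac]
  have hmemA : ∀ ν : Measure (Fin I.nQ → ℝ), IsProbabilityMeasure ν →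
      (∀ᵐ β ∂ν, ∀ q, 0 ≤ β q) →
      (∫ β, ∑ q, landCost (I.S q) (I.α q) (I.b q) (β q) ∂ν) ≤ I.budget →
      (∫ β, ∑ q, landClicks (I.S q) (I.α q) (I.b q) (β q) ∂ν) ≤ sSup A := by
    intro ν hν hβ hcost
    refine le_csSup hbdd ?_
    rw [hA_def]
    exact ⟨ν, hν, hβ, hcost, rfl⟩
  have hVub : ∀ x : ℝ, 0 < x →
      sSup A ≤ (∑ q, landClicks (I.S q) (I.α q) (I.b q) x) + I.budget / x := by
    intro x hx
    refine csSup_le ⟨_, hz_mem⟩ ?_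
    intro r hr
    rw [hA_def] at hr
    obtain ⟨ν, hν, -, hc, rfl⟩ := hr
    exact hkey x hx ν hν hc
  have hspend : ∀ x l : ℝ, 0 ≤ l → l ≤ 1 →
      spendD I (ENNReal.ofReal l • Measure.dirac (fun _ => x) +
        ENNReal.ofReal (1 - l) • Measure.dirac (fun _ => (0 : ℝ))) =
      l * ∑ q, landCost (I.S q) (I.α q) (I.b q) x := by
    intro x l hl0 hl1
    unfold spendD
    rw [integral_two_dirac (spendVec I) _ _ hl0 (by linarith : (0:ℝ) ≤ 1 - l),
      spendVec_const, spendVec_const, hSp0, mul_zero, add_zero]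
  have htraffic : ∀ x l : ℝ, 0 ≤ l → l ≤ 1 →
      trafficD I (ENNReal.ofReal l • Measure.dirac (fun _ => x) +
        ENNReal.ofReal (1 - l) • Measure.dirac (fun _ => (0 : ℝ))) =
      l * (∑ q, landClicks (I.S q) (I.α q) (I.b q) x) +
        (1 - l) * ∑ q, landClicks (I.S q) (I.α q) (I.b q) 0 := by
    intro x l hl0 hl1
    unfold trafficD
    rw [integral_two_dirac (trafficVec I) _ _ hl0 (by linarith : (0:ℝ) ≤ 1 - l),
      trafficVec_const, trafficVec_const]
  rcases le_or_gt (sSup A) 0 with hV | hV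
  · refine ⟨_, ⟨0, 1, le_rfl, zero_le_one, le_rfl, rfl⟩, ?_, ?_⟩
    · rw [hspend 0 1 zero_le_one le_rfl, hSp0, mul_zero]
      exact I.budget_nonneg
    · intro ν hν hβ hcost
      have h1 := hmemA ν hν hβ hcost
      rw [htraffic 0 1 zero_le_one le_rfl]
      have h2 := hT0 0
      linarith
  · rcases I.budget_nonneg.eq_or_lt with hB | hB
    · -- budget = 0
      refine ⟨_, ⟨0, 1, le_rfl, zero_le_one, le_rfl, rfl⟩, ?_, ?_⟩
      · rw [hspend 0 1 zero_le_one le_rfl, hSp0, mul_zero]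
        exact I.budget_nonneg
      · intro ν hν hβ hcost
        haveI := hν
        have hg0 : (∫ β, ∑ q, landCost (I.S q) (I.α q) (I.b q) (β q) ∂ν) = 0 :=
          le_antisymm (hcost.trans hB.ge) (integral_nonneg fun β => hgnn β)
        have hgz : (fun β => ∑ q, landCost (I.S q) (I.α q) (I.b q) (β q)) =ᵐ[ν] 0 :=
          (integral_eq_zero_iff_of_nonneg (fun β => hgnn β) (hgint ν hν)).mp hg0
        have hae : ∀ᵐ β ∂ν, (∑ q, landClicks (I.S q) (I.α q) (I.b q) (β q)) ≤
            ∑ q, landClicks (I.S q) (I.α q) (I.b q) 0 := by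
          filter_upwards [hgz] with β hc0
          have hc0' : (∑ q, landCost (I.S q) (I.α q) (I.b q) (β q)) = 0 := hc0
          refine Finset.sum_le_sum fun q _ => ?_
          refine landClicks_le_zero_bid (I.α_anti q) (I.α_last q) ?_
          have hnn : ∀ q ∈ (Finset.univ : Finset (Fin I.nQ)),
              0 ≤ landCost (I.S q) (I.α q) (I.b q) (β q) := fun q _ =>
            landCost_nonneg (I.α_anti q) (I.α_last q) (I.b_anti q) (I.b_last q) _
          exact (Finset.sum_eq_zero_iff_of_nonneg hnn).mp hc0' q (Finset.mem_univ q)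
        have h1 : (∫ β, ∑ q, landClicks (I.S q) (I.α q) (I.b q) (β q) ∂ν) ≤
            ∑ q, landClicks (I.S q) (I.α q) (I.b q) 0 := by
          have h := integral_mono_ae (hfint ν hν) (integrable_const _) hae
          rwa [integral_const, probReal_univ, one_smul] at h
        have h2 : 0 ≤ ∫ β, ∑ q, landClicks (I.S q) (I.α q) (I.b q) (β q) ∂ν :=
          integral_nonneg fun β => hfnn β
        rw [htraffic 0 1 zero_le_one le_rfl]
        linarith
    · -- 0 < budget
      set x := 2 * I.budget / sSup A with hx_def
      have hx : 0 < x := by rw [hx_def]; positivity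
      have hBx : I.budget / x = sSup A / 2 := by
        rw [hx_def]
        have h1 : sSup A ≠ 0 := hV.ne'
        have h2 : I.budget ≠ 0 := hB.ne'
        field_simp
      rcases le_or_gt (∑ q, landCost (I.S q) (I.α q) (I.b q) x) I.budget with hS | hS
      · refine ⟨_, ⟨x, 1, hx.le, zero_le_one, le_rfl, rfl⟩, ?_, ?_⟩
        · rw [hspend x 1 zero_le_one le_rfl, one_mul]
          exact hS
        · intro ν hν hβ hcost
          have h1 := hmemA ν hν hβ hcost
          have h2 := hVub x hx
          rw [hBx] at h2
          rw [htraffic x 1 zero_le_one le_rfl]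
          have h3 := hT0 0
          linarith
      · have hSpos : 0 < ∑ q, landCost (I.S q) (I.α q) (I.b q) x := hB.trans hS
        set l := I.budget / (∑ q, landCost (I.S q) (I.α q) (I.b q) x) with hl_def
        have hl0 : 0 ≤ l := div_nonneg I.budget_nonneg hSpos.le
        have hl1 : l ≤ 1 := (div_le_one hSpos).mpr hS.le
        refine ⟨_, ⟨x, l, hx.le, hl0, hl1, rfl⟩, ?_, ?_⟩
        · rw [hspend x l hl0 hl1, hl_def, div_mul_cancel₀ _ (ne_of_gt hSpos)]
        · intro ν hν hβ hcost
          have h1 := hmemA ν hν hβ hcost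
          have hSle : (∑ q, landCost (I.S q) (I.α q) (I.b q) x) ≤
              (∑ q, landClicks (I.S q) (I.α q) (I.b q) x) * x := by
            calc (∑ q, landCost (I.S q) (I.α q) (I.b q) x)
                ≤ ∑ q, landClicks (I.S q) (I.α q) (I.b q) x * x :=
                  Finset.sum_le_sum fun q _ =>
                    landCost_le_clicks_mul (I.α_anti q) (I.α_last q) (I.b_last q) hx.le
              _ = _ := (Finset.sum_mul _ _ _).symm
          have h4 : I.budget / x ≤ l * (∑ q, landClicks (I.S q) (I.α q) (I.b q) x) := by
            rw [hl_def, div_mul_eq_mul_div, div_le_div_iff₀ hx hSpos]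
            nlinarith [mul_le_mul_of_nonneg_left hSle I.budget_nonneg]
          rw [htraffic x l hl0 hl1]
          have h3 := hT0 0
          have h5 : 0 ≤ (1 - l) * ∑ q, landClicks (I.S q) (I.α q) (I.b q) 0 :=
            mul_nonneg (by linarith) (hT0 0)
          rw [hBx] at *
          linarith [hBx]
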